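/- (Quantiles at vanishing truncation levels converge to the endpoints of the support.) Let g₀ be a log-concave probability density on ℝ with distribution function G₀, and define G₀⁻¹(1) = sup{x : G₀(x) < 1} ∈ (−∞, +∞] and G₀⁻¹(0) = inf{x : G₀(x) > 0} ∈ [−∞, +∞). Let (h_n) be probability densities on ℝ with distribution functions H_n such that sup_x |H_n(x) − G₀(x)| → 0, and let η_n ∈ (0, 1/2) with η_n → 0 and √2·H(h_n, g₀) ≤ η_n/2 for every n, where H denotes the Hellinger distance. Then H_n⁻¹(1−η_n) → G₀⁻¹(1) and H_n⁻¹(η_n) → G₀⁻¹(0), the convergences being in the extended real line (in particular H_n⁻¹(1−η_n) → +∞ when G₀⁻¹(1) = +∞, and H_n⁻¹(η_n) → −∞ when G₀⁻¹(0) = −∞). -/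

import Mathlib

open MeasureTheory Filter

noncomputable section

/-- `f` is a probability density on `ℝ`. -/
def IsProbDensity (f : ℝ → ℝ) : Prop :=
  (∀ x, 0 ≤ f x) ∧ Integrable f ∧ ∫ x, f x = 1

/-- `f` is log-concave: `f((1-t)x + ty) ≥ f(x)^{1-t} f(y)^t`, multiplicative form. -/
def IsLogConcave (f : ℝ → ℝ) : Prop :=
  ∀ x y a b : ℝ, 0 ≤ a → 0 ≤ b → a + b = 1 →
    f x ^ a * f y ^ b ≤ f (a * x + b * y)

/-- Hellinger distance between densities: `H(f,g)² = ½∫(√f − √g)²`. -/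
def hellingerDist (f g : ℝ → ℝ) : ℝ :=
  Real.sqrt ((1 / 2) * ∫ x, (Real.sqrt (f x) - Real.sqrt (g x)) ^ 2)

/-- The distribution function of a density `f`: `F(x) = ∫_{−∞}^x f`. -/
def cdfOf (f : ℝ → ℝ) (x : ℝ) : ℝ := ∫ t in Set.Iic x, f t

/-- The quantile function `F⁻¹(t) = inf {x : F(x) ≥ t}`. -/
def quantile (F : ℝ → ℝ) (t : ℝ) : ℝ := sInf {x | t ≤ F x}

/-! ### Auxiliary lemmas on cdfs -/

lemma cdf_mono {f : ℝ → ℝ} (hf : IsProbDensity f) : Monotone (cdfOf f) := fun x y hxy =>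
  setIntegral_mono_set hf.2.1.integrableOn (ae_of_all _ hf.1)
    (HasSubset.Subset.eventuallyLE (Set.Iic_subset_Iic.2 hxy))

lemma cdf_nonneg {f : ℝ → ℝ} (hf : IsProbDensity f) (x : ℝ) : 0 ≤ cdfOf f x :=
  setIntegral_nonneg measurableSet_Iic fun t _ => hf.1 t

lemma cdf_le_one {f : ℝ → ℝ} (hf : IsProbDensity f) (x : ℝ) : cdfOf f x ≤ 1 := by
  have : cdfOf f x ≤ ∫ t in Set.univ, f t :=
    setIntegral_mono_set hf.2.1.integrableOn (ae_of_all _ hf.1)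
      (HasSubset.Subset.eventuallyLE (Set.subset_univ _))
  simpa [setIntegral_univ, hf.2.2] using this

lemma exists_cdf_ge {f : ℝ → ℝ} (hf : IsProbDensity f) {t : ℝ} (ht : t < 1) :
    ∃ x : ℝ, t ≤ cdfOf f x := by
  have hU : (⋃ n : ℕ, Set.Iic (n : ℝ)) = Set.univ := by
    ext x; simp only [Set.mem_iUnion, Set.mem_Iic, Set.mem_univ, iff_true]
    exact exists_nat_ge x
  have hT : Tendsto (fun n : ℕ => cdfOf f n) atTop (nhds 1) := by
    have := tendsto_setIntegral_of_monotone (f := f) (μ := volume)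
      (s := fun n : ℕ => Set.Iic (n : ℝ)) (fun n => measurableSet_Iic)
      (fun m n hmn => Set.Iic_subset_Iic.2 (by exact_mod_cast hmn))
      (by rw [hU]; exact hf.2.1.integrableOn)
    rw [hU] at this
    simpa [setIntegral_univ, hf.2.2, cdfOf] using this
  obtain ⟨n, hn⟩ := (hT.eventually (eventually_gt_nhds ht)).exists
  exact ⟨n, hn.le⟩

lemma exists_cdf_lt {f : ℝ → ℝ} (hf : IsProbDensity f) {t : ℝ} (ht : 0 < t) :
    ∃ x : ℝ, cdfOf f x < t := by
  have hI : (⋂ n : ℕ, Set.Iic (-(n : ℝ))) = ∅ := by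
    ext x; simp only [Set.mem_iInter, Set.mem_Iic, Set.mem_empty_iff_false, iff_false, not_forall,
      not_le]
    obtain ⟨n, hn⟩ := exists_nat_gt (-x)
    exact ⟨n, by linarith⟩
  have hT : Tendsto (fun n : ℕ => cdfOf f (-(n : ℝ))) atTop (nhds 0) := by
    have := tendsto_setIntegral_of_antitone (f := f) (μ := volume)
      (s := fun n : ℕ => Set.Iic (-(n : ℝ))) (fun n => measurableSet_Iic)
      (fun m n hmn => Set.Iic_subset_Iic.2 (by exact_mod_cast neg_le_neg (Nat.cast_le.2 hmn)))
      ⟨0, hf.2.1.integrableOn⟩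
    rw [hI] at this
    simpa [cdfOf] using this
  obtain ⟨n, hn⟩ := (hT.eventually (eventually_lt_nhds ht)).exists
  exact ⟨_, hn⟩

/-- Total variation type bound: the Kolmogorov distance of the cdfs is bounded by
`√2` times the Hellinger distance. -/
lemma cdf_dist_le {f g : ℝ → ℝ} (hf : IsProbDensity f) (hg : IsProbDensity g) (x : ℝ) :
    |cdfOf f x - cdfOf g x| ≤ Real.sqrt 2 * hellingerDist f g := by
  set u : ℝ → ℝ := fun t => Real.sqrt (f t) - Real.sqrt (g t) with hu
  set v : ℝ → ℝ := fun t => Real.sqrt (f t) + Real.sqrt (g t) with hv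
  have hfm := hf.2.1.aestronglyMeasurable
  have hgm := hg.2.1.aestronglyMeasurable
  have hsf : AEStronglyMeasurable (fun t => Real.sqrt (f t)) volume :=
    Real.continuous_sqrt.comp_aestronglyMeasurable hfm
  have hsg : AEStronglyMeasurable (fun t => Real.sqrt (g t)) volume :=
    Real.continuous_sqrt.comp_aestronglyMeasurable hgm
  have hum : AEStronglyMeasurable u volume := hsf.sub hsg
  have hvm : AEStronglyMeasurable v volume := hsf.add hsg
  have hbound : Integrable (fun t => 2 * f t + 2 * g t) :=
    (hf.2.1.const_mul 2).add (hg.2.1.const_mul 2)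
  have hsq : ∀ t, u t ^ 2 ≤ 2 * f t + 2 * g t ∧ v t ^ 2 ≤ 2 * f t + 2 * g t := by
    intro t
    have h1 : Real.sqrt (f t) ^ 2 = f t := Real.sq_sqrt (hf.1 t)
    have h2 : Real.sqrt (g t) ^ 2 = g t := Real.sq_sqrt (hg.1 t)
    simp only [hu, hv]
    constructor
    · nlinarith [sq_nonneg (Real.sqrt (f t) + Real.sqrt (g t))]
    · nlinarith [sq_nonneg (Real.sqrt (f t) - Real.sqrt (g t))]
  have hu2 : Integrable (fun t => u t ^ 2) := by
    refine hbound.mono' (hum.pow 2) (ae_of_all _ fun t => ?_)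
    rw [Real.norm_eq_abs, abs_of_nonneg (sq_nonneg _)]; exact (hsq t).1
  have hv2 : Integrable (fun t => v t ^ 2) := by
    refine hbound.mono' (hvm.pow 2) (ae_of_all _ fun t => ?_)
    rw [Real.norm_eq_abs, abs_of_nonneg (sq_nonneg _)]; exact (hsq t).2
  have hfg : Integrable (fun t => f t - g t) := hf.2.1.sub hg.2.1
  have habs : Integrable (fun t => |f t - g t|) := hfg.abs
  -- step 1: |cdf diff| ≤ (1/2) ∫ |f-g|
  have step1 : |cdfOf f x - cdfOf g x| ≤ (1 / 2) * ∫ t, |f t - g t| := by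
    have hd : cdfOf f x - cdfOf g x = ∫ t in Set.Iic x, (f t - g t) := by
      rw [integral_sub hf.2.1.integrableOn hg.2.1.integrableOn]; rfl
    have hsplit : (∫ t in Set.Iic x, (f t - g t)) + ∫ t in (Set.Iic x)ᶜ, (f t - g t) = 0 := by
      rw [integral_add_compl measurableSet_Iic hfg, integral_sub hf.2.1 hg.2.1, hf.2.2, hg.2.2,
        sub_self]
    have habs_split : (∫ t in Set.Iic x, |f t - g t|) + ∫ t in (Set.Iic x)ᶜ, |f t - g t| =
        ∫ t, |f t - g t| := integral_add_compl measurableSet_Iic habs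
    have h1 : |∫ t in Set.Iic x, (f t - g t)| ≤ ∫ t in Set.Iic x, |f t - g t| := by
      simpa [Real.norm_eq_abs] using
        norm_integral_le_integral_norm (μ := volume.restrict (Set.Iic x)) (fun t => f t - g t)
    have h2 : |∫ t in (Set.Iic x)ᶜ, (f t - g t)| ≤ ∫ t in (Set.Iic x)ᶜ, |f t - g t| := by
      simpa [Real.norm_eq_abs] using
        norm_integral_le_integral_norm (μ := volume.restrict (Set.Iic x)ᶜ) (fun t => f t - g t)
    have heq : |∫ t in Set.Iic x, (f t - g t)| = |∫ t in (Set.Iic x)ᶜ, (f t - g t)| := by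
      rw [show (∫ t in Set.Iic x, (f t - g t)) = -(∫ t in (Set.Iic x)ᶜ, (f t - g t)) by
        linarith, abs_neg]
    rw [hd]
    linarith [abs_nonneg (∫ t in Set.Iic x, (f t - g t))]
  -- step 2: Cauchy-Schwarz
  have hmem_u : MemLp u (ENNReal.ofReal 2) volume := by
    rw [show ENNReal.ofReal 2 = 2 by norm_num]
    exact (memLp_two_iff_integrable_sq hum).2 hu2
  have hmem_v : MemLp v (ENNReal.ofReal 2) volume := by
    rw [show ENNReal.ofReal 2 = 2 by norm_num]
    exact (memLp_two_iff_integrable_sq hvm).2 hv2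
  have hCS := integral_mul_norm_le_Lp_mul_Lq (μ := volume)
    (Real.HolderConjugate.two_two : Real.HolderConjugate 2 2) hmem_u hmem_v
  set A := ∫ t, u t ^ 2 with hA
  set B := ∫ t, v t ^ 2 with hB
  have hA0 : 0 ≤ A := integral_nonneg fun t => sq_nonneg _
  have hB0 : 0 ≤ B := integral_nonneg fun t => sq_nonneg _
  have e1 : ∫ a, ‖u a‖ ^ (2:ℝ) = A := by
    refine integral_congr_ae (ae_of_all _ fun a => ?_)
    show ‖u a‖ ^ (2:ℝ) = u a ^ 2
    rw [Real.norm_eq_abs, show (2:ℝ) = ((2:ℕ):ℝ) by norm_num, Real.rpow_natCast, sq_abs]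
  have e2 : ∫ a, ‖v a‖ ^ (2:ℝ) = B := by
    refine integral_congr_ae (ae_of_all _ fun a => ?_)
    show ‖v a‖ ^ (2:ℝ) = v a ^ 2
    rw [Real.norm_eq_abs, show (2:ℝ) = ((2:ℕ):ℝ) by norm_num, Real.rpow_natCast, sq_abs]
  rw [e1, e2, ← Real.sqrt_eq_rpow, ← Real.sqrt_eq_rpow] at hCS
  have e3 : ∫ t, |f t - g t| = ∫ a, ‖u a‖ * ‖v a‖ := by
    refine integral_congr_ae (ae_of_all _ fun t => ?_)
    have h1 : Real.sqrt (f t) ^ 2 = f t := Real.sq_sqrt (hf.1 t)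
    have h2 : Real.sqrt (g t) ^ 2 = g t := Real.sq_sqrt (hg.1 t)
    have huv : f t - g t = u t * v t := by simp only [hu, hv]; nlinarith
    show |f t - g t| = ‖u t‖ * ‖v t‖
    simp only [Real.norm_eq_abs, huv, abs_mul]
  have hB4 : B ≤ 4 := by
    have : B ≤ ∫ t, (2 * f t + 2 * g t) := integral_mono hv2 hbound fun t => (hsq t).2
    have h4 : ∫ t, (2 * f t + 2 * g t) = 4 := by
      rw [integral_add (hf.2.1.const_mul 2) (hg.2.1.const_mul 2), integral_const_mul,
        integral_const_mul, hf.2.2, hg.2.2]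
      norm_num
    linarith
  have hsB : Real.sqrt B ≤ 2 := by
    have : Real.sqrt B ≤ Real.sqrt 4 := Real.sqrt_le_sqrt hB4
    rwa [show (4:ℝ) = 2 ^ 2 by norm_num, Real.sqrt_sq two_pos.le] at this
  have hH : Real.sqrt 2 * hellingerDist f g = Real.sqrt A := by
    rw [hellingerDist, ← Real.sqrt_mul (by norm_num : (0:ℝ) ≤ 2)]
    norm_num
    rfl
  rw [hH]
  have hsA : 0 ≤ Real.sqrt A := Real.sqrt_nonneg A
  nlinarith [step1, e3, hCS, Real.sqrt_le_sqrt hA0]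

/-! ### EReal convergence helpers -/

lemma tendsto_coe_sSup_of (q : ℕ → ℝ) (T : Set ℝ) (hne : T.Nonempty)
    (hlow : ∀ x ∈ T, ∀ᶠ n in atTop, x ≤ q n)
    (hup : ∀ y : ℝ, y ∉ T → ∀ n, q n ≤ y) :
    Tendsto (fun n => ((q n : ℝ) : EReal)) atTop (nhds (sSup (Real.toEReal '' T))) := by
  obtain ⟨x₀, hx₀⟩ := hne
  have hble : (x₀ : EReal) ≤ sSup (Real.toEReal '' T) := le_sSup ⟨x₀, hx₀, rfl⟩
  rcases eq_or_ne (sSup (Real.toEReal '' T)) ⊤ with htop | htop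
  · rw [htop, EReal.tendsto_nhds_top_iff_real]
    intro M
    have hMb : (M : EReal) < sSup (Real.toEReal '' T) := htop ▸ EReal.coe_lt_top M
    obtain ⟨_, ⟨x, hxT, rfl⟩, hMx⟩ := lt_sSup_iff.1 hMb
    filter_upwards [hlow x hxT] with n hn
    exact lt_of_lt_of_le hMx (EReal.coe_le_coe_iff.2 hn)
  · have hbot : sSup (Real.toEReal '' T) ≠ ⊥ := fun hb => by
      rw [hb] at hble
      exact (EReal.coe_ne_bot x₀) (le_bot_iff.1 hble)
    obtain ⟨r, hr⟩ : ∃ r : ℝ, sSup (Real.toEReal '' T) = (r : EReal) :=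
      ⟨(sSup (Real.toEReal '' T)).toReal, (EReal.coe_toReal htop hbot).symm⟩
    rw [hr, EReal.tendsto_coe]
    refine tendsto_order.2 ⟨fun a ha => ?_, fun a ha => ?_⟩
    · have : (a : EReal) < sSup (Real.toEReal '' T) := by
        rw [hr]; exact_mod_cast ha
      obtain ⟨_, ⟨x, hxT, rfl⟩, hax⟩ := lt_sSup_iff.1 this
      have hax' : a < x := by exact_mod_cast hax
      filter_upwards [hlow x hxT] with n hn
      exact lt_of_lt_of_le hax' hn
    · have hy1 : r < (r + a) / 2 := by linarith
      have hy2 : (r + a) / 2 < a := by linarith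
      have hyT : (r + a) / 2 ∉ T := fun hmem => by
        have : (((r + a) / 2 : ℝ) : EReal) ≤ (r : EReal) := hr ▸ le_sSup ⟨_, hmem, rfl⟩
        exact absurd (EReal.coe_le_coe_iff.1 this) (not_le.2 hy1)
      exact Eventually.of_forall fun n => lt_of_le_of_lt (hup _ hyT n) hy2

lemma tendsto_coe_sInf_of (q : ℕ → ℝ) (T : Set ℝ) (hne : T.Nonempty)
    (hup : ∀ x ∈ T, ∀ᶠ n in atTop, q n ≤ x)
    (hlow : ∀ y : ℝ, y ∉ T → ∀ n, y ≤ q n) :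
    Tendsto (fun n => ((q n : ℝ) : EReal)) atTop (nhds (sInf (Real.toEReal '' T))) := by
  obtain ⟨x₀, hx₀⟩ := hne
  have hble : sInf (Real.toEReal '' T) ≤ (x₀ : EReal) := sInf_le ⟨x₀, hx₀, rfl⟩
  rcases eq_or_ne (sInf (Real.toEReal '' T)) ⊥ with hbot | hbot
  · rw [hbot, EReal.tendsto_nhds_bot_iff_real]
    intro M
    have hMb : sInf (Real.toEReal '' T) < (M : EReal) := hbot ▸ EReal.bot_lt_coe M
    obtain ⟨_, ⟨x, hxT, rfl⟩, hMx⟩ := sInf_lt_iff.1 hMb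
    filter_upwards [hup x hxT] with n hn
    exact lt_of_le_of_lt (EReal.coe_le_coe_iff.2 hn) hMx
  · have htop : sInf (Real.toEReal '' T) ≠ ⊤ := fun hb => by
      rw [hb] at hble
      exact (EReal.coe_ne_top x₀) (top_le_iff.1 hble)
    obtain ⟨r, hr⟩ : ∃ r : ℝ, sInf (Real.toEReal '' T) = (r : EReal) :=
      ⟨(sInf (Real.toEReal '' T)).toReal, (EReal.coe_toReal htop hbot).symm⟩
    rw [hr, EReal.tendsto_coe]
    refine tendsto_order.2 ⟨fun a ha => ?_, fun a ha => ?_⟩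
    · have hy1 : (r + a) / 2 < r := by linarith
      have hy2 : a < (r + a) / 2 := by linarith
      have hyT : (r + a) / 2 ∉ T := fun hmem => by
        have : (r : EReal) ≤ (((r + a) / 2 : ℝ) : EReal) := hr ▸ sInf_le ⟨_, hmem, rfl⟩
        exact absurd (EReal.coe_le_coe_iff.1 this) (not_le.2 hy1)
      exact Eventually.of_forall fun n => lt_of_lt_of_le hy2 (hlow _ hyT n)
    · have : sInf (Real.toEReal '' T) < (a : EReal) := by
        rw [hr]; exact_mod_cast ha
      obtain ⟨_, ⟨x, hxT, rfl⟩, hax⟩ := sInf_lt_iff.1 this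
      have hax' : x < a := by exact_mod_cast hax
      filter_upwards [hup x hxT] with n hn
      exact lt_of_le_of_lt hn hax'

/-- **Quantiles at vanishing truncation levels converge to the endpoints of the support.**
Let `g₀` be log-concave with distribution function `G₀`; put `G₀⁻¹(1) = sup{x : G₀(x) < 1}`
and `G₀⁻¹(0) = inf{x : G₀(x) > 0}` (extended reals).  If `(h_n)` are densities with
`sup_x |H_n(x) − G₀(x)| → 0`, `η_n ∈ (0,1/2)`, `η_n → 0` and `√2·H(h_n, g₀) ≤ η_n/2`, then
`H_n⁻¹(1−η_n) → G₀⁻¹(1)` and `H_n⁻¹(η_n) → G₀⁻¹(0)` in the extended real line. -/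
theorem truncation_quantiles_tendsto_support_endpoints
    (g₀ : ℝ → ℝ) (hg₀ : IsProbDensity g₀) (hlc : IsLogConcave g₀)
    (h : ℕ → ℝ → ℝ) (hh : ∀ n, IsProbDensity (h n))
    (hunif : Tendsto (fun n => ⨆ x : ℝ, |cdfOf (h n) x - cdfOf g₀ x|) atTop (nhds 0))
    (η : ℕ → ℝ) (hη : ∀ n, 0 < η n ∧ η n < 1 / 2) (hη0 : Tendsto η atTop (nhds 0))
    (hhell : ∀ n, Real.sqrt 2 * hellingerDist (h n) g₀ ≤ η n / 2) :
    Tendsto (fun n => ((quantile (cdfOf (h n)) (1 - η n) : ℝ) : EReal)) atTop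
        (nhds (sSup (Real.toEReal '' {x : ℝ | cdfOf g₀ x < 1}))) ∧
      Tendsto (fun n => ((quantile (cdfOf (h n)) (η n) : ℝ) : EReal)) atTop
        (nhds (sInf (Real.toEReal '' {x : ℝ | 0 < cdfOf g₀ x}))) := by
  have δb : ∀ n x, |cdfOf (h n) x - cdfOf g₀ x| ≤ η n / 2 := fun n x =>
    (cdf_dist_le (hh n) hg₀ x).trans (hhell n)
  have hle : ∀ n x, cdfOf (h n) x ≤ cdfOf g₀ x + η n / 2 := fun n x => by
    have := abs_le.1 (δb n x); linarith [this.2]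
  have hge : ∀ n x, cdfOf g₀ x - η n / 2 ≤ cdfOf (h n) x := fun n x => by
    have := abs_le.1 (δb n x); linarith [this.1]
  constructor
  · -- upper quantiles
    have hSne : ∀ n, {x : ℝ | 1 - η n ≤ cdfOf (h n) x}.Nonempty := fun n =>
      exists_cdf_ge (hh n) (by linarith [(hη n).1])
    have hSbdd : ∀ n, BddBelow {x : ℝ | 1 - η n ≤ cdfOf (h n) x} := fun n => by
      obtain ⟨x₀, hx₀⟩ := exists_cdf_lt (hh n) (t := 1 - η n) (by linarith [(hη n).2])
      refine ⟨x₀, fun y hy => ?_⟩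
      by_contra hxy
      push_neg at hxy
      have : cdfOf (h n) y < 1 - η n := lt_of_le_of_lt (cdf_mono (hh n) hxy.le) hx₀
      exact absurd hy (not_le.2 this)
    refine tendsto_coe_sSup_of _ _ (exists_cdf_lt hg₀ one_pos) (fun x hx => ?_) (fun y hy n => ?_)
    · have hx1 : cdfOf g₀ x < 1 := hx
      have hev : ∀ᶠ n in atTop, η n < (1 - cdfOf g₀ x) * (2 / 3) :=
        hη0.eventually (eventually_lt_nhds (by linarith))
      filter_upwards [hev] with n hn
      have hlt : cdfOf (h n) x < 1 - η n := by have := hle n x; linarith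
      refine le_csInf (hSne n) fun y hy => ?_
      by_contra hxy
      push_neg at hxy
      have : cdfOf (h n) y < 1 - η n := lt_of_le_of_lt (cdf_mono (hh n) hxy.le) hlt
      exact absurd hy (not_le.2 this)
    · have hy1 : cdfOf g₀ y = 1 :=
        le_antisymm (cdf_le_one hg₀ y) (not_lt.1 hy)
      refine csInf_le (hSbdd n) ?_
      show 1 - η n ≤ cdfOf (h n) y
      have h' : (1 : ℝ) - η n / 2 ≤ cdfOf (h n) y := by rw [← hy1]; exact hge n y
      linarith [(hη n).1]
  · -- lower quantiles
    have hSne : ∀ n, {x : ℝ | η n ≤ cdfOf (h n) x}.Nonempty := fun n =>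
      exists_cdf_ge (hh n) (by linarith [(hη n).2])
    have hSbdd : ∀ n, BddBelow {x : ℝ | η n ≤ cdfOf (h n) x} := fun n => by
      obtain ⟨x₀, hx₀⟩ := exists_cdf_lt (hh n) (hη n).1
      refine ⟨x₀, fun y hy => ?_⟩
      by_contra hxy
      push_neg at hxy
      have : cdfOf (h n) y < η n := lt_of_le_of_lt (cdf_mono (hh n) hxy.le) hx₀
      exact absurd hy (not_le.2 this)
    have hT2ne : {x : ℝ | 0 < cdfOf g₀ x}.Nonempty := by
      obtain ⟨x, hx⟩ := exists_cdf_ge hg₀ (t := 1 / 2) (by norm_num)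
      exact ⟨x, by simp only [Set.mem_setOf_eq]; linarith⟩
    refine tendsto_coe_sInf_of _ _ hT2ne (fun x hx => ?_) (fun y hy n => ?_)
    · have hx0 : 0 < cdfOf g₀ x := hx
      have hev : ∀ᶠ n in atTop, η n < cdfOf g₀ x * (2 / 3) :=
        hη0.eventually (eventually_lt_nhds (by linarith))
      filter_upwards [hev] with n hn
      refine csInf_le (hSbdd n) ?_
      show η n ≤ cdfOf (h n) x
      have := hge n x
      linarith
    · have hy0 : cdfOf g₀ y = 0 :=
        le_antisymm (not_lt.1 hy) (cdf_nonneg hg₀ y)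
      refine le_csInf (hSne n) fun z hz => ?_
      by_contra hzy
      push_neg at hzy
      have h1 : cdfOf (h n) z ≤ cdfOf (h n) y := cdf_mono (hh n) hzy.le
      have h2 : cdfOf (h n) y ≤ η n / 2 := by have := hle n y; rw [hy0] at this; linarith
      have : cdfOf (h n) z < η n := by linarith [(hη n).1]
      exact absurd hz (not_le.2 this)

end
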